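/- Let A, B, C be three non-collinear points in the Euclidean plane, with incenter I and excenters E_A, E_B, E_C. Let J be the inversion with center I and radius 1. Then J(A) is the excenter of the triangle with vertices J(E_A), J(E_B), J(E_C) opposite the vertex J(E_A). (This is the concrete planar form of the remark that the second point of the double dual returns to the second original point.) -/

import Mathlib

open EuclideanGeometry

/-- The incenter of the triangle `A B C`, as the affine combination
`(a·A + b·B + c·C)/(a+b+c)` with `a = dist B C`, `b = dist C A`, `c = dist A B`. -/
noncomputable def incenterPt (A B C : EuclideanSpace ℝ (Fin 2)) : EuclideanSpace ℝ (Fin 2) :=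
  (dist B C + dist C A + dist A B)⁻¹ •
    (dist B C • A + dist C A • B + dist A B • C)

/-- The excenter of the triangle `A B C` opposite the first vertex `A`. -/
noncomputable def excenterPt (A B C : EuclideanSpace ℝ (Fin 2)) : EuclideanSpace ℝ (Fin 2) :=
  (-dist B C + dist C A + dist A B)⁻¹ •
    ((-dist B C) • A + dist C A • B + dist A B • C)

section Aux

local notation "V" => EuclideanSpace ℝ (Fin 2)

private lemma inner_three (A B C : V) :
    (inner ℝ (A - B) (A - C) : ℝ) = (dist C A ^ 2 + dist A B ^ 2 - dist B C ^ 2) / 2 := by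
  have h : B - C = (B - A) + (A - C) := by abel
  have h2 := norm_add_sq_real (B - A) (A - C)
  rw [← h] at h2
  have h3 : (inner ℝ (B - A) (A - C) : ℝ) = - inner ℝ (A - B) (A - C) := by
    rw [← neg_sub A B, inner_neg_left]
  simp only [dist_eq_norm]
  rw [h3] at h2
  have e1 : ‖B - A‖ = ‖A - B‖ := norm_sub_rev _ _
  have e2 : ‖A - C‖ = ‖C - A‖ := norm_sub_rev _ _
  rw [e1, e2] at h2
  linarith

private lemma inversion_one (O x : V) :
    inversion O 1 x = (‖x - O‖ ^ 2)⁻¹ • (x - O) + O := by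
  rw [inversion]
  simp [dist_eq_norm, div_pow]

private lemma dist_shrink (I X Y : V) {μ : ℝ} (hμ : 0 ≤ μ) :
    dist (I - μ • (X - I)) (I - μ • (Y - I)) = μ * dist X Y := by
  rw [dist_eq_norm, show (I - μ • (X - I)) - (I - μ • (Y - I)) = μ • (Y - X) by module,
    norm_smul, Real.norm_eq_abs, abs_of_nonneg hμ, ← dist_eq_norm, dist_comm]

private lemma incenter_rot (A B C : V) : incenterPt B C A = incenterPt A B C := by
  rw [incenterPt, incenterPt]
  match_scalars <;> ring

private lemma sub_incenter (A B C : V) (hs : dist B C + dist C A + dist A B ≠ 0) :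
    A - incenterPt A B C =
      (dist B C + dist C A + dist A B)⁻¹ • (dist C A • (A - B) + dist A B • (A - C)) := by
  rw [incenterPt]
  match_scalars <;> field_simp <;> ring

private lemma norm_sub_incenter (A B C : V)
    (hs : 0 < dist B C + dist C A + dist A B) :
    ‖A - incenterPt A B C‖ ^ 2 =
      dist C A * dist A B * (-dist B C + dist C A + dist A B) /
        (dist B C + dist C A + dist A B) := by
  rw [sub_incenter A B C hs.ne', norm_smul, mul_pow, norm_add_sq_real, norm_smul, norm_smul,
    real_inner_smul_left, real_inner_smul_right, inner_three]
  have e1 : ‖A - B‖ = dist A B := (dist_eq_norm A B).symm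
  have e2 : ‖A - C‖ = dist C A := by rw [← dist_eq_norm, dist_comm]
  rw [e1, e2, Real.norm_eq_abs, Real.norm_eq_abs, Real.norm_eq_abs, abs_inv,
    abs_of_pos hs, abs_of_nonneg dist_nonneg, abs_of_nonneg dist_nonneg]
  field_simp
  ring

private lemma excenter_sub_incenter (A B C : V)
    (hs : dist B C + dist C A + dist A B ≠ 0)
    (hsa : -dist B C + dist C A + dist A B ≠ 0) :
    excenterPt A B C - incenterPt A B C =
      (-(2 * dist B C) / (-dist B C + dist C A + dist A B)) • (A - incenterPt A B C) := by
  rw [excenterPt, incenterPt]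
  match_scalars <;> field_simp <;> ring

private lemma inv_excenter (A B C : V) (μ : ℝ)
    (hμ : μ = (dist B C + dist C A + dist A B) /
        (2 * (dist B C * (dist C A * dist A B))))
    (ha : 0 < dist B C) (hb : 0 < dist C A) (hc : 0 < dist A B)
    (hA : 0 < -dist B C + dist C A + dist A B) :
    inversion (incenterPt A B C) 1 (excenterPt A B C) =
      incenterPt A B C - μ • (A - incenterPt A B C) := by
  set a := dist B C
  set b := dist C A
  set c := dist A B
  have hs : 0 < a + b + c := by positivity
  have hEI := excenter_sub_incenter A B C hs.ne' hA.ne'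
  have hn := norm_sub_incenter A B C hs
  rw [inversion_one, hEI, norm_smul, mul_pow, smul_smul, Real.norm_eq_abs, sq_abs, hn]
  have hcoef : ((-(2 * a) / (-a + b + c)) ^ 2 * (b * c * (-a + b + c) / (a + b + c)))⁻¹ *
      (-(2 * a) / (-a + b + c)) = -μ := by
    rw [hμ]
    field_simp
  rw [hcoef]
  module

end Aux

/-- Planar form of the remark that the second point of the double dual returns to
the second original point: `J(A)` is the excenter of the triangle
`J(E_A) J(E_B) J(E_C)` opposite `J(E_A)`, where `J` is inversion in the unit circle
centered at the incenter `I`. -/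
theorem double_dual_second_point (A B C : EuclideanSpace ℝ (Fin 2))
    (h : AffineIndependent ℝ ![A, B, C]) :
    inversion (incenterPt A B C) 1 A =
      excenterPt (inversion (incenterPt A B C) 1 (excenterPt A B C))
        (inversion (incenterPt A B C) 1 (excenterPt B C A))
        (inversion (incenterPt A B C) 1 (excenterPt C A B)) := by
  -- nondegeneracy
  have hinj := h.injective
  have hAB : A ≠ B := by
    intro e; exact absurd (hinj (show ![A,B,C] 0 = ![A,B,C] 1 by simpa using e)) (by decide)
  have hBC : B ≠ C := by
    intro e; exact absurd (hinj (show ![A,B,C] 1 = ![A,B,C] 2 by simpa using e)) (by decide)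
  have hCA : C ≠ A := by
    intro e; exact absurd (hinj (show ![A,B,C] 2 = ![A,B,C] 0 by simpa using e)) (by decide)
  have hcol : ¬ Collinear ℝ ({A, B, C} : Set (EuclideanSpace ℝ (Fin 2))) := by
    have := affineIndependent_iff_not_collinear.mp h
    intro hc; apply this
    convert hc using 2
    ext x
    simp [Matrix.range_cons, Matrix.range_empty]
    tauto
  have ha : 0 < dist B C := dist_pos.mpr hBC
  have hb : 0 < dist C A := dist_pos.mpr hCA
  have hc : 0 < dist A B := dist_pos.mpr hAB
  have strictA : 0 < -dist B C + dist C A + dist A B := by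
    rcases lt_or_eq_of_le (dist_triangle B A C) with hlt | heq
    · rw [dist_comm B A, dist_comm A C] at hlt; linarith
    · exfalso
      apply hcol
      have hw : Wbtw ℝ B A C := dist_add_dist_eq_iff.mp heq.symm
      have := hw.collinear
      rwa [Set.insert_comm] at this
  have strictB : 0 < -dist C A + dist A B + dist B C := by
    rcases lt_or_eq_of_le (dist_triangle C B A) with hlt | heq
    · rw [dist_comm C B, dist_comm B A] at hlt; linarith
    · exfalso
      apply hcol
      have hw : Wbtw ℝ C B A := dist_add_dist_eq_iff.mp heq.symm
      have := hw.collinear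
      have h2 : ({C, B, A} : Set (EuclideanSpace ℝ (Fin 2))) = {A, B, C} := by
        ext x; simp; tauto
      rwa [h2] at this
  have strictC : 0 < -dist A B + dist B C + dist C A := by
    rcases lt_or_eq_of_le (dist_triangle A C B) with hlt | heq
    · rw [dist_comm A C, dist_comm C B] at hlt; linarith
    · exfalso
      apply hcol
      have hw : Wbtw ℝ A C B := dist_add_dist_eq_iff.mp heq.symm
      have := hw.collinear
      have h2 : ({A, C, B} : Set (EuclideanSpace ℝ (Fin 2))) = {A, B, C} := by
        ext x; simp; tauto
      rwa [h2] at this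
  set a := dist B C with hadef
  set b := dist C A with hbdef
  set c := dist A B with hcdef
  have hs : 0 < a + b + c := by positivity
  set μ : ℝ := (a + b + c) / (2 * (a * (b * c))) with hμdef
  have hμpos : 0 < μ := by positivity
  have hPA := inv_excenter A B C μ rfl ha hb hc strictA
  have hPB := inv_excenter B C A μ (by rw [hμdef]; ring) hb hc ha strictB
  have hPC := inv_excenter C A B μ (by rw [hμdef]; ring) hc ha hb strictC
  rw [incenter_rot] at hPB
  rw [← incenter_rot C A B] at hPC
  rw [hPA, hPB, hPC, excenterPt]
  rw [dist_shrink (incenterPt A B C) B C hμpos.le, dist_shrink (incenterPt A B C) C A hμpos.le,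
    dist_shrink (incenterPt A B C) A B hμpos.le]
  rw [inversion_one, norm_sub_incenter A B C hs]
  simp only [← hadef, ← hbdef, ← hcdef]
  set I := incenterPt A B C with hIdef
  have hu : (-a) • (A - I) + b • (B - I) + c • (C - I) = (-(2*a)) • (A - I) := by
    rw [hIdef, incenterPt]
    simp only [← hadef, ← hbdef, ← hcdef]
    match_scalars <;> field_simp <;> ring
  have hcombo : (-(μ * a)) • (I - μ • (A - I)) + (μ * b) • (I - μ • (B - I)) +
      (μ * c) • (I - μ • (C - I)) =
      (μ * (-a + b + c)) • I - (μ * μ) • ((-a) • (A - I) + b • (B - I) + c • (C - I)) := by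
    module
  have hR : (-(μ * a) + μ * b + μ * c)⁻¹ • ((-(μ * a)) • (I - μ • (A - I)) +
      (μ * b) • (I - μ • (B - I)) + (μ * c) • (I - μ • (C - I))) =
      I + (2 * a * μ / (-a + b + c)) • (A - I) := by
    rw [hcombo, hu]
    have hne : -(μ * a) + μ * b + μ * c ≠ 0 := by
      have : -(μ * a) + μ * b + μ * c = μ * (-a + b + c) := by ring
      rw [this]
      positivity
    match_scalars <;> field_simp <;> ring
  rw [hR, hμdef]
  match_scalars <;> field_simp <;> ring
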